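/- For every integer $n \ge 2$: $\sum_{k=0}^{n} (4k-1)^3 \frac{(-\frac{1}{2})_k^2\,(-n)_k\,(n-1)_k}{(1)_k^2\,(n+\frac{1}{2})_k\,(\frac{3}{2}-n)_k} = 0$. -/

import Mathlib

open Finset

/-- Pochhammer symbol `(a)_k = a(a+1)⋯(a+k-1)` for a rational `a`. -/
def poch (a : ℚ) (k : ℕ) : ℚ := ∏ i ∈ Finset.range k, (a + i)

/-- Euler numbers, defined by `∑ E_n x^n/n! = 2e^x/(e^{2x}+1) = sech x`. -/
def eulerNumber : ℕ → ℤ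
  | 0 => 1
  | n + 1 =>
    -∑ k ∈ (Finset.range (n + 1)).attach,
      if Even (n + 1 - k.1) then ((n + 1).choose k.1 : ℤ) * eulerNumber k.1 else 0
  decreasing_by exact Finset.mem_range.mp k.2

/-- `x ≡ y (mod p^m)` for rationals: `v_p(x - y) ≥ m` (with `x = y` allowed). -/
def ratCongr (p m : ℕ) (x y : ℚ) : Prop :=
  x = y ∨ (m : ℤ) ≤ padicValRat p (x - y)

lemma poch_succ' (a : ℚ) (k : ℕ) : poch a (k + 1) = poch a k * (a + k) :=
  Finset.prod_range_succ _ _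

lemma pochA_ne (n k : ℕ) : poch ((n : ℚ) + 1/2) k ≠ 0 := by
  unfold poch
  rw [Finset.prod_ne_zero_iff]
  intro i _ h
  have h2 : ((2 * (n + i) + 1 : ℕ) : ℚ) = 0 := by push_cast; linarith
  have h3 : (2 * (n + i) + 1 : ℕ) = 0 := by exact_mod_cast h2
  omega

lemma pochB_ne (n k : ℕ) : poch (3/2 - (n : ℚ)) k ≠ 0 := by
  unfold poch
  rw [Finset.prod_ne_zero_iff]
  intro i _ h
  have h2 : ((2 * i - 2 * n + 3 : ℤ) : ℚ) = 0 := by push_cast; linarith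
  have h3 : (2 * (i : ℤ) - 2 * n + 3 : ℤ) = 0 := by exact_mod_cast h2
  omega

lemma den_ne (n k : ℕ) :
    ((k.factorial : ℚ) ^ 2 * poch ((n : ℚ) + 1/2) k * poch (3/2 - (n : ℚ)) k) ≠ 0 := by
  refine mul_ne_zero (mul_ne_zero (pow_ne_zero _ ?_) (pochA_ne n k)) (pochB_ne n k)
  exact_mod_cast k.factorial_ne_zero

/-- Certificate for the telescoping partial sums. -/
def Hnum (n k : ℚ) : ℚ :=
  (n - k) * (2 * k - 1) ^ 2 * (n + k - 1) * ((n ^ 2 - n) * (16 * k ^ 2 + 8 * k - 1) + 2 * k ^ 2 + k)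

lemma key (n : ℕ) (m : ℕ) :
    (∑ k ∈ Finset.range (m + 1),
      (4 * k - 1 : ℚ) ^ 3 * (poch (-(1/2)) k ^ 2 * poch (-(n : ℚ)) k * poch ((n : ℚ) - 1) k) /
        ((k.factorial : ℚ) ^ 2 * poch ((n : ℚ) + 1/2) k * poch (3/2 - (n : ℚ)) k)) *
      ((n : ℚ) ^ 2 * ((n : ℚ) - 1) ^ 2 *
        ((m.factorial : ℚ) ^ 2 * poch ((n : ℚ) + 1/2) m * poch (3/2 - (n : ℚ)) m)) =
    Hnum (n : ℚ) (m : ℚ) *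
      (poch (-(1/2)) m ^ 2 * poch (-(n : ℚ)) m * poch ((n : ℚ) - 1) m) := by
  induction m with
  | zero =>
      simp [poch, Hnum]
      ring
  | succ m ih =>
      have hd : ((((m+1).factorial : ℚ)) ^ 2 * poch ((n : ℚ) + 1/2) (m+1) *
            poch (3/2 - (n : ℚ)) (m+1)) =
          ((m.factorial : ℚ) ^ 2 * poch ((n : ℚ) + 1/2) m * poch (3/2 - (n : ℚ)) m) *
            (((m : ℚ) + 1) ^ 2 * ((n : ℚ) + 1/2 + m) * (3/2 - (n : ℚ) + m)) := by
        rw [poch_succ', poch_succ', Nat.factorial_succ]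
        push_cast
        ring
      have hn : (poch (-(1/2)) (m+1) ^ 2 * poch (-(n : ℚ)) (m+1) * poch ((n : ℚ) - 1) (m+1)) =
          (poch (-(1/2)) m ^ 2 * poch (-(n : ℚ)) m * poch ((n : ℚ) - 1) m) *
            ((-(1/2) + (m : ℚ)) ^ 2 * (-(n : ℚ) + m) * ((n : ℚ) - 1 + m)) := by
        rw [poch_succ', poch_succ', poch_succ']
        ring
      have hD1 := den_ne n (m + 1)
      rw [Finset.sum_range_succ, add_mul]
      calc
        (∑ k ∈ Finset.range (m + 1),
            (4 * k - 1 : ℚ) ^ 3 * (poch (-(1/2)) k ^ 2 * poch (-(n : ℚ)) k * poch ((n : ℚ) - 1) k) /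
              ((k.factorial : ℚ) ^ 2 * poch ((n : ℚ) + 1/2) k * poch (3/2 - (n : ℚ)) k)) *
            ((n : ℚ) ^ 2 * ((n : ℚ) - 1) ^ 2 *
              ((((m+1).factorial : ℚ)) ^ 2 * poch ((n : ℚ) + 1/2) (m+1) *
                poch (3/2 - (n : ℚ)) (m+1))) +
          (4 * (m+1 : ℕ) - 1 : ℚ) ^ 3 *
              (poch (-(1/2)) (m+1) ^ 2 * poch (-(n : ℚ)) (m+1) * poch ((n : ℚ) - 1) (m+1)) /
              ((((m+1).factorial : ℚ)) ^ 2 * poch ((n : ℚ) + 1/2) (m+1) *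
                poch (3/2 - (n : ℚ)) (m+1)) *
            ((n : ℚ) ^ 2 * ((n : ℚ) - 1) ^ 2 *
              ((((m+1).factorial : ℚ)) ^ 2 * poch ((n : ℚ) + 1/2) (m+1) *
                poch (3/2 - (n : ℚ)) (m+1)))
            = ((∑ k ∈ Finset.range (m + 1),
                (4 * k - 1 : ℚ) ^ 3 *
                  (poch (-(1/2)) k ^ 2 * poch (-(n : ℚ)) k * poch ((n : ℚ) - 1) k) /
                  ((k.factorial : ℚ) ^ 2 * poch ((n : ℚ) + 1/2) k * poch (3/2 - (n : ℚ)) k)) *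
                ((n : ℚ) ^ 2 * ((n : ℚ) - 1) ^ 2 *
                  ((m.factorial : ℚ) ^ 2 * poch ((n : ℚ) + 1/2) m * poch (3/2 - (n : ℚ)) m))) *
                (((m : ℚ) + 1) ^ 2 * ((n : ℚ) + 1/2 + m) * (3/2 - (n : ℚ) + m)) +
              ((4 * (m+1 : ℕ) - 1 : ℚ) ^ 3 *
                  (poch (-(1/2)) (m+1) ^ 2 * poch (-(n : ℚ)) (m+1) * poch ((n : ℚ) - 1) (m+1)) /
                  ((((m+1).factorial : ℚ)) ^ 2 * poch ((n : ℚ) + 1/2) (m+1) *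
                    poch (3/2 - (n : ℚ)) (m+1)) *
                ((((m+1).factorial : ℚ)) ^ 2 * poch ((n : ℚ) + 1/2) (m+1) *
                  poch (3/2 - (n : ℚ)) (m+1))) *
                ((n : ℚ) ^ 2 * ((n : ℚ) - 1) ^ 2) := by
              rw [hd]; ring
        _ = (Hnum (n : ℚ) (m : ℚ) *
                (poch (-(1/2)) m ^ 2 * poch (-(n : ℚ)) m * poch ((n : ℚ) - 1) m)) *
                (((m : ℚ) + 1) ^ 2 * ((n : ℚ) + 1/2 + m) * (3/2 - (n : ℚ) + m)) +
              ((4 * (m+1 : ℕ) - 1 : ℚ) ^ 3 *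
                (poch (-(1/2)) (m+1) ^ 2 * poch (-(n : ℚ)) (m+1) * poch ((n : ℚ) - 1) (m+1))) *
                ((n : ℚ) ^ 2 * ((n : ℚ) - 1) ^ 2) := by
              rw [ih, div_mul_cancel₀ _ hD1]
        _ = Hnum (n : ℚ) ((m+1 : ℕ) : ℚ) *
              (poch (-(1/2)) (m+1) ^ 2 * poch (-(n : ℚ)) (m+1) * poch ((n : ℚ) - 1) (m+1)) := by
              rw [hn]
              simp only [Hnum]
              push_cast
              ring

theorem stmt12 (n : ℕ) (hn : 2 ≤ n) :
    ∑ k ∈ Finset.range (n + 1),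
      (4 * k - 1 : ℚ) ^ 3 * (poch (-(1/2)) k ^ 2 * poch (-(n : ℚ)) k * poch ((n : ℚ) - 1) k) /
        ((k.factorial : ℚ) ^ 2 * poch ((n : ℚ) + 1/2) k * poch (3/2 - (n : ℚ)) k) = 0 := by
  have h := key n n
  have h0 : Hnum (n : ℚ) (n : ℚ) = 0 := by simp [Hnum]
  rw [h0, zero_mul] at h
  have hn2 : (2 : ℚ) ≤ (n : ℚ) := by exact_mod_cast hn
  have hC : ((n : ℚ) ^ 2 * ((n : ℚ) - 1) ^ 2 *
      ((n.factorial : ℚ) ^ 2 * poch ((n : ℚ) + 1/2) n * poch (3/2 - (n : ℚ)) n)) ≠ 0 := by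
    refine mul_ne_zero (mul_ne_zero (pow_ne_zero _ ?_) (pow_ne_zero _ ?_)) (den_ne n n)
    · intro h'; rw [h'] at hn2; norm_num at hn2
    · intro h'; have : (n : ℚ) = 1 := by linarith [sub_eq_zero.mp h']
      rw [this] at hn2; norm_num at hn2
  exact (mul_eq_zero.mp h).resolve_right hC
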